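/- arXiv:2403.08166 — 3 statements merged into one kernel-verified Lean document; each statement's English description precedes it below -/
import Mathlib

section
/- Let d ≥ 1 and let ψ : ℝ × ℝ^d → ℝ^d, (t,y) ↦ ψ(t,y), be twice continuously differentiable. Write Ψ(t,y) = D_yψ(t,y) for the spatial Jacobian matrix. Then for every (t,y), ∂_t det(Ψ(t,y)) = div_y( Adj(Ψ(t,·)) ∂_tψ(t,·) )(y), i.e. the time derivative of the Jacobian determinant equals the spatial divergence of the vector field y ↦ Adj(D_yψ(t,y)) ∂_tψ(t,y). -/
open Matrix

noncomputable def detC (d : ℕ) :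
    ContinuousMultilinearMap ℝ (fun _ : Fin d => (Fin d → ℝ)) ℝ :=
  MultilinearMap.mkContinuous
    (Matrix.detRowAlternating (n := Fin d) (R := ℝ)).toMultilinearMap
    (d.factorial) (by
      intro m
      have h : (Matrix.detRowAlternating (n := Fin d) (R := ℝ)) m = Matrix.det (Matrix.of m) := rfl
      rw [AlternatingMap.coe_multilinearMap, h, Matrix.det_apply]
      calc ‖∑ σ : Equiv.Perm (Fin d), Equiv.Perm.sign σ • ∏ i, Matrix.of m (σ i) i‖
          ≤ ∑ σ : Equiv.Perm (Fin d), ‖Equiv.Perm.sign σ • ∏ i, Matrix.of m (σ i) i‖ :=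
            norm_sum_le _ _
        _ ≤ ∑ _σ : Equiv.Perm (Fin d), ∏ i, ‖m i‖ := by
            apply Finset.sum_le_sum
            intro σ _
            have h1 : ‖Equiv.Perm.sign σ • ∏ i, Matrix.of m (σ i) i‖
                = ‖∏ i, Matrix.of m (σ i) i‖ := by
              rcases Int.units_eq_one_or (Equiv.Perm.sign σ) with h | h <;> simp [h]
            rw [h1]
            have h2 : ‖∏ i, Matrix.of m (σ i) i‖ ≤ ∏ i, ‖m (σ i)‖ := by
              rw [norm_prod]
              apply Finset.prod_le_prod (fun _ _ => norm_nonneg _)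
              intro i _
              exact norm_le_pi_norm (m (σ i)) i
            calc ‖∏ i, Matrix.of m (σ i) i‖ ≤ ∏ i, ‖m (σ i)‖ := h2
              _ = ∏ i, ‖m i‖ := Equiv.prod_comp σ (fun k => ‖m k‖)
        _ = (d.factorial : ℝ) * ∏ i, ‖m i‖ := by
            rw [Finset.sum_const, nsmul_eq_mul]
            congr 1
            simp [Fintype.card_perm]
      )

lemma detC_apply {d : ℕ} (m : Fin d → Fin d → ℝ) : detC d m = Matrix.det (Matrix.of m) := rfl

lemma detC_swap {d : ℕ} (m : Fin d → Fin d → ℝ) {i j : Fin d} (h : i ≠ j) :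
    detC d (m ∘ Equiv.swap i j) = - detC d m :=
  (Matrix.detRowAlternating (n := Fin d) (R := ℝ)).map_swap m h



/-- The (spatial) Jacobian matrix of a map `f : ℝ^d → ℝ^d` at a point `y`:
`(jacobian f y) i j = ∂ f_i / ∂ y_j`. -/
noncomputable def jacobian {d : ℕ} (f : (Fin d → ℝ) → (Fin d → ℝ)) (y : Fin d → ℝ) :
    Matrix (Fin d) (Fin d) ℝ :=
  Matrix.of fun i j => fderiv ℝ f y (Pi.single j 1) i

/-- The divergence of a vector field `v : ℝ^d → ℝ^d` at a point `y`:
`∑ i, ∂ v_i / ∂ y_i`. -/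
noncomputable def vdiv {d : ℕ} (v : (Fin d → ℝ) → (Fin d → ℝ)) (y : Fin d → ℝ) : ℝ :=
  ∑ i, fderiv ℝ (fun z => v z i) y (Pi.single i 1)

/-- For a twice continuously differentiable evolution `ψ : ℝ × ℝ^d → ℝ^d`, the time
derivative of the Jacobian determinant equals the spatial divergence of the vector field
`y ↦ Adj(D_yψ(t,y)) ∂_tψ(t,y)`. -/
theorem deriv_det_jacobian_eq_div {d : ℕ} (hd : 1 ≤ d)
    (ψ : ℝ → (Fin d → ℝ) → (Fin d → ℝ))
    (hψ : ContDiff ℝ 2 (fun p : ℝ × (Fin d → ℝ) => ψ p.1 p.2)) :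
    ∀ (t : ℝ) (y : Fin d → ℝ),
      deriv (fun s => (jacobian (ψ s) y).det) t
        = vdiv (fun z =>
            (Matrix.adjugate (jacobian (ψ t) z)).mulVec
              (fun j => deriv (fun s => ψ s z j) t)) y := by
  intro t y
  classical
  set Φ : ℝ × (Fin d → ℝ) → (Fin d → ℝ) := fun p => ψ p.1 p.2 with hΦdef
  have hΦ : ContDiff ℝ 2 Φ := hψ
  have hΦd : Differentiable ℝ Φ := hΦ.differentiable (by norm_num)
  set F : ℝ × (Fin d → ℝ) → (ℝ × (Fin d → ℝ)) →L[ℝ] (Fin d → ℝ) := fderiv ℝ Φ with hFdef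
  have hFc : ContDiff ℝ 1 F := hΦ.fderiv_right (by norm_num)
  have hFd : Differentiable ℝ F := hFc.differentiable one_ne_zero
  set S := fderiv ℝ F (t, y) with hSdef
  have hS : HasFDerivAt F S (t, y) := (hFd (t, y)).hasFDerivAt
  have hsymm : ∀ u w, S u w = S w u :=
    second_derivative_symmetric (fun p => (hΦd p).hasFDerivAt) hS
  -- spatial derivative of ψ s
  have hψfd : ∀ (s : ℝ) (z : Fin d → ℝ),
      HasFDerivAt (ψ s) ((F (s, z)).comp (ContinuousLinearMap.inr ℝ ℝ (Fin d → ℝ))) z :=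
    fun s z => ((hΦd (s, z)).hasFDerivAt).comp z (hasFDerivAt_prodMk_right s z)
  -- determinant of the jacobian via detC
  have hjac : ∀ (s : ℝ) (z : Fin d → ℝ),
      (jacobian (ψ s) z).det = detC d (fun j => F (s, z) (0, Pi.single j 1)) := by
    intro s z
    rw [detC_apply, ← Matrix.det_transpose]
    congr 1
    ext j i
    simp [jacobian, (hψfd s z).fderiv]
  -- time derivative of ψ
  have hvvec : ∀ (z : Fin d → ℝ) (j : Fin d), deriv (fun s => ψ s z j) t = F (t, z) (1, 0) j := by
    intro z j
    have h1 : HasDerivAt (fun s => ψ s z) (F (t, z) (1, 0)) t := by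
      have h0 := ((hΦd (t, z)).hasFDerivAt).comp_hasDerivAt t
        ((hasDerivAt_id t).prodMk (hasDerivAt_const t z))
      exact h0
    exact ((hasDerivAt_pi.mp h1) j).deriv
  -- the vector field, componentwise
  have hvf : ∀ (i : Fin d) (z : Fin d → ℝ),
      (Matrix.adjugate (jacobian (ψ t) z)).mulVec (fun j => deriv (fun s => ψ s z j) t) i
        = detC d (fun j =>
            Function.update (fun j' => F (t, z) (0, Pi.single j' 1)) i (F (t, z) (1, 0)) j) := by
    intro i z
    rw [← Matrix.cramer_eq_adjugate_mulVec, Matrix.cramer_apply, detC_apply,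
      ← Matrix.det_transpose]
    congr 1
    ext j k
    rcases eq_or_ne j i with rfl | hji
    · simp [Matrix.updateCol_apply, hvvec z k]
    · simp [Matrix.updateCol_apply, hji, Function.update_of_ne hji, jacobian,
        (hψfd t z).fderiv]
  -- abbreviations at the base point
  set A : Fin d → (Fin d → ℝ) := fun j => F (t, y) (0, Pi.single j 1) with hA
  set b : Fin d → ℝ := F (t, y) (1, 0) with hb
  -- LHS as a sum
  have hL : HasDerivAt (fun s => detC d (fun j => F (s, y) (0, Pi.single j 1)))
      (∑ j, detC d (Function.update A j (S (1, 0) (0, Pi.single j 1)))) t := by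
    have hg : ∀ j : Fin d, HasFDerivAt (fun s => F (s, y) (0, Pi.single j 1))
        (ContinuousLinearMap.smulRight (1 : ℝ →L[ℝ] ℝ) (S (1, 0) (0, Pi.single j 1))) t := by
      intro j
      have h2 : HasFDerivAt (fun p => F p (0, Pi.single j 1))
          (S.flip (0, Pi.single j 1)) (t, y) := by
        simpa using hS.clm_apply (hasFDerivAt_const ((0 : ℝ), Pi.single j 1) (t, y))
      have h3 : HasDerivAt (fun s => F (s, y) (0, Pi.single j 1))
          (S (1, 0) (0, Pi.single j 1)) t := by
        have h4 := h2.comp_hasDerivAt t ((hasDerivAt_id t).prodMk (hasDerivAt_const t y))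
        simp only [ContinuousLinearMap.flip_apply] at h4
        exact h4
      exact hasDerivAt_iff_hasFDerivAt.mp h3
    have hD := HasFDerivAt.multilinear_comp (detC d) hg
    have hDd := hD.hasDerivAt
    convert hDd using 1
    · rfl
    · rfl
    simp [ContinuousLinearMap.sum_apply, hA]
  have hLHS : deriv (fun s => (jacobian (ψ s) y).det) t
      = ∑ j, detC d (Function.update A j (S (1, 0) (0, Pi.single j 1))) := by
    rw [show (fun s => (jacobian (ψ s) y).det)
        = fun s => detC d (fun j => F (s, y) (0, Pi.single j 1)) from funext fun s => hjac s y]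
    exact hL.deriv
  -- RHS as a double sum
  have hFz : ∀ w : ℝ × (Fin d → ℝ), HasFDerivAt (fun z => F (t, z) w)
      ((S.flip w).comp (ContinuousLinearMap.inr ℝ ℝ (Fin d → ℝ))) y := by
    intro w
    have h2 : HasFDerivAt (fun p => F p w) (S.flip w) (t, y) := by
      simpa using hS.clm_apply (hasFDerivAt_const w (t, y))
    exact h2.comp y (hasFDerivAt_prodMk_right t y)
  have hR : ∀ i : Fin d,
      fderiv ℝ (fun z => detC d (fun j =>
          Function.update (fun j' => F (t, z) (0, Pi.single j' 1)) i (F (t, z) (1, 0)) j)) y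
          (Pi.single i 1)
        = ∑ j, detC d (Function.update (Function.update A i b) j
            (S (0, Pi.single i 1)
              (if j = i then ((1 : ℝ), (0 : Fin d → ℝ)) else (0, Pi.single j 1)))) := by
    intro i
    have hg : ∀ j : Fin d, HasFDerivAt
        (fun z => Function.update (fun j' => F (t, z) (0, Pi.single j' 1)) i (F (t, z) (1, 0)) j)
        ((S.flip (if j = i then ((1 : ℝ), (0 : Fin d → ℝ)) else (0, Pi.single j 1))).comp
          (ContinuousLinearMap.inr ℝ ℝ (Fin d → ℝ))) y := by
      intro j
      rcases eq_or_ne j i with rfl | hji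
      · have heq : (fun z => Function.update (fun j' => F (t, z) (0, Pi.single j' 1)) j
            (F (t, z) (1, 0)) j) = fun z => F (t, z) (1, 0) := by
          funext z; simp
        rw [heq, if_pos rfl]
        exact hFz ((1 : ℝ), (0 : Fin d → ℝ))
      · have heq : (fun z => Function.update (fun j' => F (t, z) (0, Pi.single j' 1)) i
            (F (t, z) (1, 0)) j) = fun z => F (t, z) (0, Pi.single j 1) := by
          funext z; simp [Function.update_of_ne hji]
        rw [heq, if_neg hji]
        exact hFz ((0 : ℝ), Pi.single j 1)
    have hD := HasFDerivAt.multilinear_comp (detC d) hg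
    rw [hD.fderiv]
    simp [ContinuousLinearMap.sum_apply, hA, hb]
  have hRHS : vdiv (fun z => (Matrix.adjugate (jacobian (ψ t) z)).mulVec
        (fun j => deriv (fun s => ψ s z j) t)) y
      = ∑ i, ∑ j, detC d (Function.update (Function.update A i b) j
          (S (0, Pi.single i 1)
            (if j = i then ((1 : ℝ), (0 : Fin d → ℝ)) else (0, Pi.single j 1)))) := by
    unfold vdiv
    refine Finset.sum_congr rfl fun i _ => ?_
    rw [show (fun z => (Matrix.adjugate (jacobian (ψ t) z)).mulVec
          (fun j => deriv (fun s => ψ s z j) t) i)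
        = (fun z => detC d (fun j =>
            Function.update (fun j' => F (t, z) (0, Pi.single j' 1)) i (F (t, z) (1, 0)) j))
        from funext fun z => hvf i z]
    exact hR i
  -- final algebra
  rw [hLHS, hRHS]
  have hdiag : ∀ i : Fin d,
      detC d (Function.update (Function.update A i b) i (S (0, Pi.single i 1) (1, 0)))
        = detC d (Function.update A i (S (1, 0) (0, Pi.single i 1))) := by
    intro i
    rw [Function.update_idem, hsymm]
  have hskew : ∀ i j : Fin d, j ≠ i →
      detC d (Function.update (Function.update A j b) i
          (S (0, Pi.single j 1) (0, Pi.single i 1)))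
        = - detC d (Function.update (Function.update A i b) j
            (S (0, Pi.single i 1) (0, Pi.single j 1))) := by
    intro i j hji
    have hij : i ≠ j := Ne.symm hji
    have hm : Function.update (Function.update A j b) i
          (S (0, Pi.single j 1) (0, Pi.single i 1))
        = (Function.update (Function.update A i b) j
            (S (0, Pi.single i 1) (0, Pi.single j 1))) ∘ Equiv.swap i j := by
      funext k
      simp only [Function.comp_apply]
      rcases eq_or_ne k i with rfl | hki
      · rw [Equiv.swap_apply_left, Function.update_self, Function.update_self]
        exact hsymm _ _
      rcases eq_or_ne k j with rfl | hkj
      · rw [Equiv.swap_apply_right, Function.update_of_ne hki, Function.update_self,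
          Function.update_of_ne hij, Function.update_self]
      · rw [Equiv.swap_apply_of_ne_of_ne hki hkj, Function.update_of_ne hki,
          Function.update_of_ne hkj, Function.update_of_ne hkj, Function.update_of_ne hki]
    rw [hm, detC_swap _ hij]
  have hsplit : ∀ i j : Fin d,
      detC d (Function.update (Function.update A i b) j
          (S (0, Pi.single i 1)
            (if j = i then ((1 : ℝ), (0 : Fin d → ℝ)) else (0, Pi.single j 1))))
        = (if j = i then detC d (Function.update A i (S (1, 0) (0, Pi.single i 1))) else 0)
          + (if j = i then 0 else detC d (Function.update (Function.update A i b) j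
              (S (0, Pi.single i 1) (0, Pi.single j 1)))) := by
    intro i j
    rcases eq_or_ne j i with rfl | hji
    · simp only [eq_self_iff_true, if_true, add_zero, Function.update_idem]
      rw [hsymm]
    · simp [hji]
  simp only [hsplit, Finset.sum_add_distrib]
  have h1 : ∀ i : Fin d, (∑ j : Fin d, if j = i
      then detC d (Function.update A i (S (1, 0) (0, Pi.single i 1))) else 0)
      = detC d (Function.update A i (S (1, 0) (0, Pi.single i 1))) := by
    intro i; simp
  have hT : (∑ i : Fin d, ∑ j : Fin d, if j = i then 0
      else detC d (Function.update (Function.update A i b) j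
        (S (0, Pi.single i 1) (0, Pi.single j 1)))) = 0 := by
    rw [← Finset.sum_product (s := Finset.univ) (t := Finset.univ)
      (f := fun p : Fin d × Fin d => if p.2 = p.1 then 0
        else detC d (Function.update (Function.update A p.1 b) p.2
          (S (0, Pi.single p.1 1) (0, Pi.single p.2 1))))]
    apply Finset.sum_involution (fun p _ => Prod.swap p)
    · intro p _
      rcases eq_or_ne p.2 p.1 with h1 | h1
      · simp [h1]
      · have h2 : p.1 ≠ p.2 := Ne.symm h1
        simp only [Prod.fst_swap, Prod.snd_swap, if_neg h1, if_neg h2]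
        rw [hskew p.1 p.2 h1]
        ring
    · intro p _ hne hsw
      apply hne
      have : p.2 = p.1 := (Prod.ext_iff.mp hsw).1
      simp [this]
    · intro p _; exact Finset.mem_univ _
    · intro p _; rfl
  rw [hT]
  simp only [h1]
  ring
end

section
/- Rate of change of the volume of an evolving domain: Let d ≥ 1, let ψ : ℝ × ℝ^d → ℝ^d be twice continuously differentiable, and let Y* ⊂ ℝ^d be a bounded measurable set. Assume that for every t the map ψ(t,·) is injective on Y* and det(D_yψ(t,y)) > 0 for all y ∈ Y*. Then the Lebesgue measure Θ(t) of the image set ψ(t, Y*) satisfies Θ(t) = ∫_{Y*} det(D_yψ(t,y)) dy; in particular Θ is differentiable in t with Θ'(t) = ∫_{Y*} div_y( Adj(D_yψ(t,·)) ∂_tψ(t,·) )(y) dy. -/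
open MeasureTheory

/-- determinant as a continuous multilinear map in the rows -/
noncomputable def detCM (d : ℕ) :
    ContinuousMultilinearMap ℝ (fun _ : Fin d => (Fin d → ℝ)) ℝ :=
  MultilinearMap.mkContinuous
    (Matrix.detRowAlternating : ((Fin d → ℝ) [⋀^Fin d]→ₗ[ℝ] ℝ)).toMultilinearMap
    (d.factorial) (by
      intro m
      have h0 : (Matrix.detRowAlternating (R := ℝ) (n := Fin d)).toMultilinearMap m
          = (Matrix.of m).det := rfl
      rw [h0, Matrix.det_apply]
      refine (norm_sum_le _ _).trans ?_
      have hb : ∀ σ : Equiv.Perm (Fin d),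
          ‖Equiv.Perm.sign σ • ∏ i, (Matrix.of m) (σ i) i‖ ≤ ∏ i, ‖m i‖ := by
        intro σ
        have h1 : ‖Equiv.Perm.sign σ • ∏ i, (Matrix.of m) (σ i) i‖
            = ‖∏ i, m (σ i) i‖ := by
          rcases Int.units_eq_one_or (Equiv.Perm.sign σ) with h | h <;> simp [h]
        rw [h1]
        have h2 : ‖∏ i, m (σ i) i‖ ≤ ∏ i, ‖m (σ i)‖ := by
          rw [Real.norm_eq_abs, Finset.abs_prod]
          refine Finset.prod_le_prod (fun i _ => abs_nonneg _) (fun i _ => ?_)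
          exact norm_le_pi_norm (m (σ i)) i
        refine h2.trans (le_of_eq ?_)
        exact Equiv.prod_comp σ (fun i => ‖m i‖)
      refine (Finset.sum_le_sum (fun σ _ => hb σ)).trans ?_
      simp [Finset.sum_const, Fintype.card_perm]
      )

theorem detCM_apply (m : Fin d → Fin d → ℝ) : detCM d m = (Matrix.of m).det := rfl

/-- expansion of the determinant along a replaced row -/
theorem det_updateRow_eq_sum (A : Matrix (Fin d) (Fin d) ℝ) (a : Fin d) (v : Fin d → ℝ) :
    (A.updateRow a v).det = ∑ j, v j * A.adjugate j a := by
  rw [← Matrix.cramer_transpose_apply]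
  have hv : v = ∑ j, v j • (Pi.single j 1 : Fin d → ℝ) := by
    funext k
    simp [Pi.single_apply]
  conv_lhs => rw [hv]
  rw [map_sum]
  rw [Finset.sum_apply]
  refine Finset.sum_congr rfl (fun j _ => ?_)
  simp [Matrix.adjugate_def]

/-- derivative of a determinant with differentiable rows -/
theorem hasFDerivAt_det_rows {G : Type*} [NormedAddCommGroup G] [NormedSpace ℝ G]
    {r : G → Fin d → Fin d → ℝ} {r' : Fin d → G →L[ℝ] (Fin d → ℝ)} {x : G}
    (h : ∀ a, HasFDerivAt (fun z => r z a) (r' a) x) :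
    HasFDerivAt (fun z => (Matrix.of (r z)).det)
      (∑ a, ((detCM d).toContinuousLinearMap (r x) a).comp (r' a)) x := by
  have := HasFDerivAt.multilinear_comp (f := detCM d) (g := fun a z => r z a)
    (g' := r') (x := x) h
  exact this

theorem detCM_deriv_apply {G : Type*} [NormedAddCommGroup G] [NormedSpace ℝ G]
    (r : G → Fin d → Fin d → ℝ) (r' : Fin d → G →L[ℝ] (Fin d → ℝ)) (x : G) (v : G) :
    (∑ a, ((detCM d).toContinuousLinearMap (r x) a).comp (r' a)) v
      = ∑ a, ((Matrix.of (r x)).updateRow a (r' a v)).det := by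
  rw [ContinuousLinearMap.sum_apply]
  refine Finset.sum_congr rfl (fun a _ => ?_)
  rw [ContinuousLinearMap.comp_apply, ContinuousMultilinearMap.toContinuousLinearMap_apply]
  rfl

/-- sum of symmetric times antisymmetric vanishes -/
theorem sum_sym_antisym {H P : Fin d → Fin d → ℝ}
    (hH : ∀ i k, H i k = H k i) (hP : ∀ i k, P i k = -P k i) :
    ∑ i, ∑ k, H i k * P i k = 0 := by
  have h2 : ∑ i, ∑ k, H i k * P i k = -∑ i, ∑ k, H i k * P i k := by
    conv_lhs => rw [Finset.sum_comm]
    rw [← Finset.sum_neg_distrib]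
    refine Finset.sum_congr rfl (fun i _ => ?_)
    rw [← Finset.sum_neg_distrib]
    refine Finset.sum_congr rfl (fun k _ => ?_)
    rw [hH i k, hP i k]
    ring
  linarith

theorem updateRow_comm' (M : Matrix (Fin d) (Fin d) ℝ) {i j : Fin d} (h : i ≠ j)
    (u v : Fin d → ℝ) :
    (M.updateRow i u).updateRow j v = (M.updateRow j v).updateRow i u := by
  ext a b
  simp only [Matrix.updateRow_apply]
  rcases eq_or_ne a i with rfl | hai <;> rcases eq_or_ne a j with rfl | haj <;> simp_all

theorem det_two_updates_zero (A : Matrix (Fin d) (Fin d) ℝ) {j a : Fin d} (hja : j ≠ a)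
    (w : Fin d → ℝ) : ((A.updateRow j w).updateRow a w).det = 0 := by
  refine Matrix.det_zero_of_row_eq hja ?_
  rw [Matrix.updateRow_ne hja, Matrix.updateRow_self, Matrix.updateRow_self]

theorem det_two_updates_antisymm (A : Matrix (Fin d) (Fin d) ℝ) {j a : Fin d} (hja : j ≠ a)
    (u v : Fin d → ℝ) :
    ((A.updateRow j u).updateRow a v).det = -((A.updateRow j v).updateRow a u).det := by
  have h0 : ((A.updateRow j (u + v)).updateRow a (u + v)).det = 0 :=
    det_two_updates_zero A hja (u + v)
  rw [Matrix.det_updateRow_add] at h0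
  rw [updateRow_comm' A hja (u + v) u, updateRow_comm' A hja (u + v) v] at h0
  rw [Matrix.det_updateRow_add, Matrix.det_updateRow_add] at h0
  rw [show (A.updateRow a u).updateRow j u = (A.updateRow j u).updateRow a u from
      updateRow_comm' A hja.symm u u,
    show (A.updateRow a u).updateRow j v = (A.updateRow j v).updateRow a u from
      updateRow_comm' A hja.symm u v,
    show (A.updateRow a v).updateRow j u = (A.updateRow j u).updateRow a v from
      updateRow_comm' A hja.symm v u,
    show (A.updateRow a v).updateRow j v = (A.updateRow j v).updateRow a v from
      updateRow_comm' A hja.symm v v] at h0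
  rw [det_two_updates_zero A hja u, det_two_updates_zero A hja v] at h0
  linarith

namespace VolEvol

variable {d : ℕ} {Φ : ℝ × (Fin d → ℝ) → (Fin d → ℝ)}

/-- second derivative of `Φ` -/
noncomputable def Smap (Φ : ℝ × (Fin d → ℝ) → (Fin d → ℝ)) (p : ℝ × (Fin d → ℝ)) :
    (ℝ × (Fin d → ℝ)) →L[ℝ] (ℝ × (Fin d → ℝ)) →L[ℝ] (Fin d → ℝ) :=
  fderiv ℝ (fderiv ℝ Φ) p

/-- spatial Jacobian matrix of `Φ` -/
noncomputable def Amat (Φ : ℝ × (Fin d → ℝ) → (Fin d → ℝ)) (p : ℝ × (Fin d → ℝ)) :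
    Matrix (Fin d) (Fin d) ℝ :=
  Matrix.of fun i j => fderiv ℝ Φ p (0, Pi.single j 1) i

/-- time derivative of the Jacobian determinant -/
noncomputable def gder (Φ : ℝ × (Fin d → ℝ) → (Fin d → ℝ)) (p : ℝ × (Fin d → ℝ)) : ℝ :=
  ∑ a, ((Amat Φ p).updateRow a
    (fun j => Smap Φ p (1, 0) (0, Pi.single j 1) a)).det

section lemmas

variable (hΦ : ContDiff ℝ 2 Φ)
include hΦ

theorem hasFDerivAt_slice (s : ℝ) (y : Fin d → ℝ) :
    HasFDerivAt (fun y => Φ (s, y))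
      ((fderiv ℝ Φ (s, y)).comp (ContinuousLinearMap.inr ℝ ℝ (Fin d → ℝ))) y :=
  ((hΦ.differentiable (by norm_num) (s, y)).hasFDerivAt).comp y
    (hasFDerivAt_prodMk_right s y)

theorem jacobian_slice (s : ℝ) (y : Fin d → ℝ) :
    jacobian (fun y => Φ (s, y)) y = Amat Φ (s, y) := by
  have h := (hasFDerivAt_slice hΦ s y).fderiv
  ext i j
  rw [jacobian, Matrix.of_apply, h]
  rfl

theorem deriv_slice (t : ℝ) (z : Fin d → ℝ) (j : Fin d) :
    deriv (fun s => Φ (s, z) j) t = fderiv ℝ Φ (t, z) (1, 0) j := by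
  have h1 : HasDerivAt (fun s : ℝ => (s, z)) ((1 : ℝ), (0 : Fin d → ℝ)) t :=
    (hasDerivAt_id t).prodMk (hasDerivAt_const t z)
  have h2 : HasDerivAt (fun s => Φ (s, z)) (fderiv ℝ Φ (t, z) (1, 0)) t :=
    ((hΦ.differentiable (by norm_num) (t, z)).hasFDerivAt).comp_hasDerivAt t h1
  have h3 := HasFDerivAt.comp_hasDerivAt t
    ((ContinuousLinearMap.proj j).hasFDerivAt (x := Φ (t, z))) h2
  have h4 : HasDerivAt (fun s => Φ (s, z) j) (fderiv ℝ Φ (t, z) (1, 0) j) t := by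
    simpa [Function.comp_def] using h3
  exact h4.deriv

theorem contDiff_fderiv : ContDiff ℝ 1 (fderiv ℝ Φ) :=
  hΦ.fderiv_right (le_refl 2)

theorem hasFDerivAt_fderiv_apply (w : ℝ × (Fin d → ℝ)) (p : ℝ × (Fin d → ℝ)) :
    HasFDerivAt (fun q => fderiv ℝ Φ q w) ((Smap Φ p).flip w) p := by
  have h1 : HasFDerivAt (fderiv ℝ Φ) (Smap Φ p) p :=
    (((contDiff_fderiv hΦ).differentiable one_ne_zero) p).hasFDerivAt
  have h2 := h1.clm_apply (hasFDerivAt_const w p)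
  simpa using h2

theorem hasFDerivAt_entry (w : ℝ × (Fin d → ℝ)) (i : Fin d) (p : ℝ × (Fin d → ℝ)) :
    HasFDerivAt (fun q => fderiv ℝ Φ q w i)
      ((ContinuousLinearMap.proj i).comp ((Smap Φ p).flip w)) p := by
  have h := HasFDerivAt.comp p
    ((ContinuousLinearMap.proj i).hasFDerivAt (x := fderiv ℝ Φ p w))
    (hasFDerivAt_fderiv_apply hΦ w p)
  simpa [Function.comp_def] using h

theorem continuous_Smap : Continuous (Smap Φ) :=
  (contDiff_fderiv hΦ).continuous_fderiv one_ne_zero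

theorem continuous_Amat : Continuous (Amat Φ) := by
  have h := hΦ.continuous_fderiv (by norm_num)
  refine continuous_pi (fun i => continuous_pi (fun j => ?_))
  exact (continuous_apply i).comp (h.clm_apply continuous_const)

theorem continuous_gder : Continuous (gder Φ) := by
  have hA : Continuous (Amat Φ) := continuous_Amat hΦ
  have hS : Continuous (Smap Φ) := continuous_Smap hΦ
  refine continuous_finset_sum _ (fun a _ => ?_)
  refine Continuous.matrix_det ?_
  refine Continuous.matrix_updateRow a hA ?_
  refine continuous_pi (fun j => ?_)
  exact (continuous_apply a).comp ((hS.clm_apply continuous_const).clm_apply continuous_const)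

theorem hasDerivAt_det_Amat (t : ℝ) (y : Fin d → ℝ) :
    HasDerivAt (fun s => (Amat Φ (s, y)).det) (gder Φ (t, y)) t := by
  set p : ℝ × (Fin d → ℝ) := (t, y) with hp
  set r : ℝ × (Fin d → ℝ) → Fin d → Fin d → ℝ :=
    fun q a => fun j => fderiv ℝ Φ q (0, Pi.single j 1) a with hr
  set r' : Fin d → (ℝ × (Fin d → ℝ)) →L[ℝ] (Fin d → ℝ) :=
    fun a => ContinuousLinearMap.pi (fun j =>
      (ContinuousLinearMap.proj a).comp ((Smap Φ p).flip (0, Pi.single j 1))) with hr'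
  have hrows : ∀ a, HasFDerivAt (fun q => r q a) (r' a) p := by
    intro a
    refine hasFDerivAt_pi.2 (fun j => ?_)
    exact hasFDerivAt_entry hΦ (0, Pi.single j 1) a p
  have hdet := hasFDerivAt_det_rows hrows
  have hline : HasDerivAt (fun s : ℝ => (s, y)) ((1 : ℝ), (0 : Fin d → ℝ)) t :=
    (hasDerivAt_id t).prodMk (hasDerivAt_const t y)
  have hcomp := hdet.comp_hasDerivAt t hline
  have hval :
      (∑ a, ((detCM d).toContinuousLinearMap (r p) a).comp (r' a)) ((1 : ℝ), (0 : Fin d → ℝ))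
        = gder Φ p := by
    rw [detCM_deriv_apply]
    refine Finset.sum_congr rfl (fun a _ => ?_)
    congr 1
  have : HasDerivAt (fun s => (Matrix.of (r (s, y))).det) (gder Φ p) t := hval ▸ hcomp
  exact this

end lemmas

/-- the Piola-type term: spatial derivative of adjugate entries -/
noncomputable def Pterm (Φ : ℝ × (Fin d → ℝ) → (Fin d → ℝ)) (t : ℝ) (y : Fin d → ℝ)
    (i j : Fin d) : ℝ :=
  ∑ a, (((Amat Φ (t, y)).updateRow j (Pi.single i 1)).updateRow a
      (if a = j then 0 else
        fun k => Smap Φ (t, y) (0, Pi.single i 1) (0, Pi.single k 1) a)).det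

section lemmas2

variable (hΦ : ContDiff ℝ 2 Φ)
include hΦ

theorem adj_entry_deriv (t : ℝ) (y : Fin d → ℝ) (i j : Fin d) :
    ∃ D : (Fin d → ℝ) →L[ℝ] ℝ,
      HasFDerivAt (fun z => (Amat Φ (t, z)).adjugate i j) D y ∧
        D (Pi.single i 1) = Pterm Φ t y i j := by
  classical
  set p : ℝ × (Fin d → ℝ) := (t, y) with hp
  set rr : (Fin d → ℝ) → Fin d → Fin d → ℝ := fun z =>
    Function.update (fun a k => fderiv ℝ Φ (t, z) (0, Pi.single k 1) a) j
      (Pi.single i 1) with hrr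
  set rr' : Fin d → (Fin d → ℝ) →L[ℝ] (Fin d → ℝ) :=
    Function.update (fun a => ContinuousLinearMap.pi fun k =>
      ((ContinuousLinearMap.proj a).comp ((Smap Φ p).flip (0, Pi.single k 1))).comp
        (ContinuousLinearMap.inr ℝ ℝ (Fin d → ℝ))) j 0 with hrr'
  have h1 : ∀ a, HasFDerivAt (fun z => rr z a) (rr' a) y := by
    intro a
    rcases eq_or_ne a j with rfl | haj
    · simp only [hrr, hrr', Function.update_self]
      exact hasFDerivAt_const _ _
    · simp only [hrr, hrr', Function.update_of_ne haj]
      refine hasFDerivAt_pi.2 (fun k => ?_)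
      have := (hasFDerivAt_entry hΦ (0, Pi.single k 1) a p).comp y
        (hasFDerivAt_prodMk_right t y)
      simpa [Function.comp_def] using this
  have h2 := hasFDerivAt_det_rows h1
  have h3 : (fun z => (Matrix.of (rr z)).det)
      = fun z => (Amat Φ (t, z)).adjugate i j := by
    funext z
    rw [Matrix.adjugate_apply]
    rfl
  rw [h3] at h2
  refine ⟨_, h2, ?_⟩
  rw [detCM_deriv_apply]
  rw [Pterm]
  refine Finset.sum_congr rfl (fun a _ => ?_)
  have hbase : Matrix.of (rr y) = (Amat Φ (t, y)).updateRow j (Pi.single i 1) := rfl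
  rw [hbase]
  congr 1
  rcases eq_or_ne a j with rfl | haj
  · simp [hrr']
  · simp only [hrr', Function.update_of_ne haj, if_neg haj]
    funext k
    rfl

theorem Bj_deriv (t : ℝ) (y : Fin d → ℝ) (j : Fin d) :
    ∃ D : (Fin d → ℝ) →L[ℝ] ℝ,
      HasFDerivAt (fun z => fderiv ℝ Φ (t, z) (1, 0) j) D y ∧
        ∀ i, D (Pi.single i 1) = Smap Φ (t, y) (0, Pi.single i 1) (1, 0) j := by
  have h := (hasFDerivAt_entry hΦ (1, 0) j (t, y)).comp y (hasFDerivAt_prodMk_right t y)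
  refine ⟨_, by simpa [Function.comp_def] using h, fun i => ?_⟩
  rfl

theorem piola (t : ℝ) (y : Fin d → ℝ) (j : Fin d) :
    ∑ i, Pterm Φ t y i j = 0 := by
  classical
  have hsym : ∀ v w, Smap Φ (t, y) v w = Smap Φ (t, y) w v := by
    have h := (hΦ.contDiffAt (x := (t, y))).isSymmSndFDerivAt (by simp)
    exact fun v w => h v w
  unfold Pterm
  rw [Finset.sum_comm]
  refine Finset.sum_eq_zero (fun a _ => ?_)
  rcases eq_or_ne a j with rfl | haj
  · refine Finset.sum_eq_zero (fun i _ => ?_)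
    simp only [if_pos rfl]
    refine Matrix.det_eq_zero_of_row_eq_zero a (fun k => ?_)
    simp [Matrix.updateRow_self]
  · have hexp : ∀ i : Fin d,
        (((Amat Φ (t, y)).updateRow j (Pi.single i 1)).updateRow a
          (if a = j then 0 else
            fun k => Smap Φ (t, y) (0, Pi.single i 1) (0, Pi.single k 1) a)).det
        = ∑ k, Smap Φ (t, y) (0, Pi.single i 1) (0, Pi.single k 1) a *
            (((Amat Φ (t, y)).updateRow j (Pi.single i 1)).updateRow a
              (Pi.single k 1)).det := by
      intro i
      rw [if_neg haj, det_updateRow_eq_sum]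
      exact Finset.sum_congr rfl (fun k _ => by rw [Matrix.adjugate_apply])
    calc ∑ i, (((Amat Φ (t, y)).updateRow j (Pi.single i 1)).updateRow a
          (if a = j then 0 else
            fun k => Smap Φ (t, y) (0, Pi.single i 1) (0, Pi.single k 1) a)).det
        = ∑ i, ∑ k, Smap Φ (t, y) (0, Pi.single i 1) (0, Pi.single k 1) a *
            (((Amat Φ (t, y)).updateRow j (Pi.single i 1)).updateRow a
              (Pi.single k 1)).det := Finset.sum_congr rfl (fun i _ => hexp i)
      _ = 0 := by
          refine sum_sym_antisym (fun i k => ?_) (fun i k => ?_)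
          · rw [hsym]
          · exact det_two_updates_antisymm _ haj.symm _ _

theorem vdiv_eq_gder (t : ℝ) (y : Fin d → ℝ) :
    vdiv (fun z => (Matrix.adjugate (Amat Φ (t, z))).mulVec
      (fun j => fderiv ℝ Φ (t, z) (1, 0) j)) y = gder Φ (t, y) := by
  classical
  have hsym : ∀ v w, Smap Φ (t, y) v w = Smap Φ (t, y) w v := by
    have h := (hΦ.contDiffAt (x := (t, y))).isSymmSndFDerivAt (by simp)
    exact fun v w => h v w
  have hadj := fun i j => adj_entry_deriv hΦ t y i j
  choose D hD hDval using hadj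
  have hBj := fun j => Bj_deriv hΦ t y j
  choose DB hDB hDBval using hBj
  have hw : ∀ i : Fin d, HasFDerivAt
      (fun z => ((Matrix.adjugate (Amat Φ (t, z))).mulVec
        (fun j => fderiv ℝ Φ (t, z) (1, 0) j)) i)
      (∑ j, ((Amat Φ (t, y)).adjugate i j • DB j
        + fderiv ℝ Φ (t, y) (1, 0) j • D i j)) y := by
    intro i
    have he : (fun z => ((Matrix.adjugate (Amat Φ (t, z))).mulVec
        (fun j => fderiv ℝ Φ (t, z) (1, 0) j)) i)
        = fun z => ∑ j, (Amat Φ (t, z)).adjugate i j * fderiv ℝ Φ (t, z) (1, 0) j := by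
      funext z
      simp [Matrix.mulVec, dotProduct]
    rw [he]
    exact HasFDerivAt.fun_sum (fun j _ => (hD i j).mul (hDB j))
  rw [vdiv]
  have hfd : ∀ i : Fin d, fderiv ℝ
      (fun z => ((Matrix.adjugate (Amat Φ (t, z))).mulVec
        (fun j => fderiv ℝ Φ (t, z) (1, 0) j)) i) y (Pi.single i 1)
      = ∑ j, ((Amat Φ (t, y)).adjugate i j * Smap Φ (t, y) (0, Pi.single i 1) (1, 0) j
          + fderiv ℝ Φ (t, y) (1, 0) j * Pterm Φ t y i j) := by
    intro i
    rw [(hw i).fderiv]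
    rw [ContinuousLinearMap.sum_apply]
    refine Finset.sum_congr rfl (fun j _ => ?_)
    rw [ContinuousLinearMap.add_apply, ContinuousLinearMap.smul_apply,
      ContinuousLinearMap.smul_apply, hDBval j i, hDval i j]
    simp [smul_eq_mul]
  have hstep : (∑ i, fderiv ℝ
      (fun z => ((Matrix.adjugate (Amat Φ (t, z))).mulVec
        (fun j => fderiv ℝ Φ (t, z) (1, 0) j)) i) y (Pi.single i 1))
      = ∑ i, ∑ j, ((Amat Φ (t, y)).adjugate i j
            * Smap Φ (t, y) (0, Pi.single i 1) (1, 0) j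
          + fderiv ℝ Φ (t, y) (1, 0) j * Pterm Φ t y i j) :=
    Finset.sum_congr rfl (fun i _ => hfd i)
  rw [hstep]
  have hsplit : (∑ i : Fin d, ∑ j, ((Amat Φ (t, y)).adjugate i j
            * Smap Φ (t, y) (0, Pi.single i 1) (1, 0) j
          + fderiv ℝ Φ (t, y) (1, 0) j * Pterm Φ t y i j))
      = (∑ i : Fin d, ∑ j, (Amat Φ (t, y)).adjugate i j
            * Smap Φ (t, y) (0, Pi.single i 1) (1, 0) j)
        + ∑ i : Fin d, ∑ j, fderiv ℝ Φ (t, y) (1, 0) j * Pterm Φ t y i j := by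
    rw [← Finset.sum_add_distrib]
    exact Finset.sum_congr rfl (fun i _ => Finset.sum_add_distrib)
  rw [hsplit]
  have hzero : (∑ i : Fin d, ∑ j, fderiv ℝ Φ (t, y) (1, 0) j * Pterm Φ t y i j) = 0 := by
    rw [Finset.sum_comm]
    refine Finset.sum_eq_zero (fun j _ => ?_)
    rw [← Finset.mul_sum, piola hΦ t y j, mul_zero]
  rw [hzero, add_zero, gder, Finset.sum_comm]
  refine Finset.sum_congr rfl (fun a _ => ?_)
  rw [det_updateRow_eq_sum]
  refine Finset.sum_congr rfl (fun i _ => ?_)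
  rw [hsym (0, Pi.single i 1) (1, 0)]
  ring

theorem toReal_volume_image (Ystar : Set (Fin d → ℝ)) (hmeas : MeasurableSet Ystar)
    (hbdd : Bornology.IsBounded Ystar) (s : ℝ)
    (hinj : Set.InjOn (fun y => Φ (s, y)) Ystar)
    (hdet : ∀ y ∈ Ystar, 0 < (Amat Φ (s, y)).det) :
    (volume ((fun y => Φ (s, y)) '' Ystar)).toReal
      = ∫ y in Ystar, (Amat Φ (s, y)).det := by
  have hf' : ∀ y ∈ Ystar, HasFDerivWithinAt (fun y => Φ (s, y))
      ((fderiv ℝ Φ (s, y)).comp (ContinuousLinearMap.inr ℝ ℝ (Fin d → ℝ))) Ystar y :=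
    fun y _ => (hasFDerivAt_slice hΦ s y).hasFDerivWithinAt
  have hcv := lintegral_abs_det_fderiv_eq_addHaar_image volume hmeas hf' hinj
  have hdeq : ∀ y : Fin d → ℝ,
      ((fderiv ℝ Φ (s, y)).comp (ContinuousLinearMap.inr ℝ ℝ (Fin d → ℝ))).det
        = (Amat Φ (s, y)).det := by
    intro y
    rw [ContinuousLinearMap.det,
      ← LinearMap.det_toMatrix' (((fderiv ℝ Φ (s, y)).comp
        (ContinuousLinearMap.inr ℝ ℝ (Fin d → ℝ)) : (Fin d → ℝ) →L[ℝ] (Fin d → ℝ))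
          : (Fin d → ℝ) →ₗ[ℝ] (Fin d → ℝ))]
    congr 1
  have hAc : Continuous fun y : Fin d → ℝ => (Amat Φ (s, y)).det :=
    Continuous.matrix_det ((continuous_Amat hΦ).comp (Continuous.prodMk_right s))
  have hK : IsCompact (closure Ystar) := hbdd.isCompact_closure
  have hInt : IntegrableOn (fun y => (Amat Φ (s, y)).det) Ystar volume :=
    ((hAc.continuousOn).integrableOn_compact hK).mono_set subset_closure
  have key : ENNReal.ofReal (∫ y in Ystar, |(Amat Φ (s, y)).det|)
      = ∫⁻ y in Ystar, ENNReal.ofReal |(Amat Φ (s, y)).det| :=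
    ofReal_integral_eq_lintegral_ofReal hInt.abs
      (Filter.Eventually.of_forall fun y => abs_nonneg _)
  have himg : volume ((fun y => Φ (s, y)) '' Ystar)
      = ENNReal.ofReal (∫ y in Ystar, |(Amat Φ (s, y)).det|) := by
    rw [key, ← hcv]
    exact lintegral_congr (fun y => by rw [hdeq y])
  rw [himg, ENNReal.toReal_ofReal (integral_nonneg fun y => abs_nonneg _)]
  exact setIntegral_congr_fun hmeas (fun y hy => abs_of_pos (hdet y hy))

end lemmas2

end VolEvol

/-- **Rate of change of the volume of an evolving domain**: for a twice continuously
differentiable evolution `ψ : ℝ × ℝ^d → ℝ^d` that is injective on a bounded measurable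
set `Y*` with positive Jacobian determinant there, the Lebesgue measure `Θ(t)` of
`ψ(t,Y*)` equals `∫_{Y*} det(D_yψ(t,y)) dy`, and `Θ` is differentiable with
`Θ'(t) = ∫_{Y*} div_y( Adj(D_yψ(t,·)) ∂_tψ(t,·) )(y) dy`. -/
theorem volume_evolving_domain {d : ℕ} (hd : 1 ≤ d)
    (ψ : ℝ → (Fin d → ℝ) → (Fin d → ℝ))
    (hψ : ContDiff ℝ 2 (fun p : ℝ × (Fin d → ℝ) => ψ p.1 p.2))
    (Ystar : Set (Fin d → ℝ)) (hmeas : MeasurableSet Ystar)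
    (hbdd : Bornology.IsBounded Ystar)
    (hinj : ∀ t : ℝ, Set.InjOn (ψ t) Ystar)
    (hdet : ∀ t : ℝ, ∀ y ∈ Ystar, 0 < (jacobian (ψ t) y).det) :
    ∀ t : ℝ,
      (volume (ψ t '' Ystar)).toReal = ∫ y in Ystar, (jacobian (ψ t) y).det
      ∧ HasDerivAt (fun s => (volume (ψ s '' Ystar)).toReal)
          (∫ y in Ystar,
            vdiv (fun z =>
              (Matrix.adjugate (jacobian (ψ t) z)).mulVec
                (fun j => deriv (fun s => ψ s z j) t)) y) t := by
  intro t
  open VolEvol in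
  set Φ : ℝ × (Fin d → ℝ) → (Fin d → ℝ) := fun p => ψ p.1 p.2 with hΦdef
  have hΦ : ContDiff ℝ 2 Φ := hψ
  have hjac : ∀ (s : ℝ) (y : Fin d → ℝ), jacobian (ψ s) y = VolEvol.Amat Φ (s, y) :=
    fun s y => VolEvol.jacobian_slice hΦ s y
  have hpart1 : ∀ s : ℝ,
      (volume (ψ s '' Ystar)).toReal = ∫ y in Ystar, (jacobian (ψ s) y).det := by
    intro s
    have h := VolEvol.toReal_volume_image hΦ Ystar hmeas hbdd s (hinj s)
      (fun y hy => by rw [← hjac]; exact hdet s y hy)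
    have himg : (fun y => Φ (s, y)) '' Ystar = ψ s '' Ystar := rfl
    rw [himg] at h
    rw [h]
    exact (setIntegral_congr_fun hmeas (fun y _ => by rw [hjac])).symm
  refine ⟨hpart1 t, ?_⟩
  have hfun : (fun s => (volume (ψ s '' Ystar)).toReal)
      = fun s => ∫ y in Ystar, (VolEvol.Amat Φ (s, y)).det := by
    funext s
    rw [hpart1 s]
    exact setIntegral_congr_fun hmeas (fun y _ => by rw [hjac])
  rw [hfun]
  have hint_eq : (∫ y in Ystar,
      vdiv (fun z => (Matrix.adjugate (jacobian (ψ t) z)).mulVec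
        (fun j => deriv (fun s => ψ s z j) t)) y)
      = ∫ y in Ystar, VolEvol.gder Φ (t, y) := by
    refine setIntegral_congr_fun hmeas (fun y _ => ?_)
    have hfun2 : (fun z => (Matrix.adjugate (jacobian (ψ t) z)).mulVec
        (fun j => deriv (fun s => ψ s z j) t))
        = fun z => (Matrix.adjugate (VolEvol.Amat Φ (t, z))).mulVec
            (fun j => fderiv ℝ Φ (t, z) (1, 0) j) := by
      funext z
      rw [hjac t z]
      have hv : (fun j => deriv (fun s => ψ s z j) t)
          = fun j => fderiv ℝ Φ (t, z) (1, 0) j :=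
        funext fun j => VolEvol.deriv_slice hΦ t z j
      rw [hv]
    rw [hfun2]
    exact VolEvol.vdiv_eq_gder hΦ t y
  rw [hint_eq]
  -- differentiation under the integral sign
  have hKc : IsCompact ((Set.Icc (t - 1) (t + 1)) ×ˢ closure Ystar) :=
    isCompact_Icc.prod hbdd.isCompact_closure
  obtain ⟨C, hC⟩ := hKc.exists_bound_of_continuousOn (VolEvol.continuous_gder hΦ).continuousOn
  have hfin : volume Ystar < ⊤ :=
    lt_of_le_of_lt (measure_mono subset_closure) hbdd.isCompact_closure.measure_lt_top
  have hAdet_cont : ∀ s : ℝ, Continuous fun y : Fin d → ℝ => (VolEvol.Amat Φ (s, y)).det :=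
    fun s => Continuous.matrix_det
      ((VolEvol.continuous_Amat hΦ).comp (Continuous.prodMk_right s))
  have hgc : Continuous fun y : Fin d → ℝ => VolEvol.gder Φ (t, y) :=
    (VolEvol.continuous_gder hΦ).comp (Continuous.prodMk_right t)
  have hmain := hasDerivAt_integral_of_dominated_loc_of_deriv_le
    (F := fun s (y : Fin d → ℝ) => (VolEvol.Amat Φ (s, y)).det)
    (F' := fun s (y : Fin d → ℝ) => VolEvol.gder Φ (s, y))
    (μ := volume.restrict Ystar) (x₀ := t) (bound := fun _ => |C| + 1)
    (s := Metric.ball t 1) (Metric.ball_mem_nhds t one_pos)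
    (Filter.Eventually.of_forall fun s => ((hAdet_cont s).aestronglyMeasurable))
    (((hAdet_cont t).continuousOn.integrableOn_compact hbdd.isCompact_closure).mono_set
      subset_closure)
    (hgc.aestronglyMeasurable)
    ?_ ?_ ?_
  · exact hmain.2
  · rw [MeasureTheory.ae_restrict_iff' hmeas]
    refine Filter.Eventually.of_forall (fun y hy => ?_)
    intro s hs
    have hsmem : s ∈ Set.Icc (t - 1) (t + 1) := by
      have := Metric.mem_ball.1 hs
      rw [Real.dist_eq] at this
      constructor <;> [linarith [abs_lt.1 this |>.1]; linarith [abs_lt.1 this |>.2]]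
    have := hC (s, y) ⟨hsmem, subset_closure hy⟩
    calc ‖VolEvol.gder Φ (s, y)‖ ≤ C := this
      _ ≤ |C| + 1 := by have := le_abs_self C; linarith
  · exact (integrableOn_const hfin.ne)
  · refine Filter.Eventually.of_forall (fun y => ?_)
    intro s _
    exact VolEvol.hasDerivAt_det_Amat hΦ s y
end

section
/- Equality of adjugate-weighted and determinant-weighted averages for divergence-free transformed fields: Let d ≥ 1, let ψ : ℝ^d → ℝ^d be twice continuously differentiable, and let u : ℝ^d → ℝ^d be continuously differentiable with compact support. Assume that the vector field y ↦ Adj(Dψ(y)) u(y) is divergence-free, i.e. div( Adj(Dψ) u )(y) = 0 for all y ∈ ℝ^d. Then ∫_{ℝ^d} Adj(Dψ(y)) u(y) dy = ∫_{ℝ^d} det(Dψ(y)) u(y) dy (equality of vectors in ℝ^d). -/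
open MeasureTheory

lemma contDiff_det_aux {d : ℕ} {X : Type*} [NormedAddCommGroup X] [NormedSpace ℝ X]
    {A : X → Matrix (Fin d) (Fin d) ℝ}
    (hA : ∀ i j, ContDiff ℝ 1 (fun z => A z i j)) :
    ContDiff ℝ 1 (fun z => (A z).det) := by
  simp_rw [Matrix.det_apply]
  apply ContDiff.sum
  intro σ _
  have : ∀ z, Equiv.Perm.sign σ • ∏ i, A z (σ i) i
      = ((Equiv.Perm.sign σ : ℤ) : ℝ) * ∏ i, A z (σ i) i := by
    intro z; rw [Units.smul_def, zsmul_eq_mul]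
  simp_rw [this]
  exact contDiff_const.mul (contDiff_prod fun i _ => hA (σ i) i)

lemma contDiff_adjugate_aux {d : ℕ} {X : Type*} [NormedAddCommGroup X] [NormedSpace ℝ X]
    {A : X → Matrix (Fin d) (Fin d) ℝ}
    (hA : ∀ i j, ContDiff ℝ 1 (fun z => A z i j)) (i j : Fin d) :
    ContDiff ℝ 1 (fun z => (A z).adjugate i j) := by
  simp_rw [Matrix.adjugate_apply]
  apply contDiff_det_aux
  intro k l
  simp_rw [Matrix.updateRow_apply]
  by_cases h : k = j
  · simp [h]; exact contDiff_const
  · simp only [h, if_false]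
    exact hA k l


/-- **Equality of adjugate-weighted and determinant-weighted averages for divergence-free
transformed fields**: if `ψ : ℝ^d → ℝ^d` is twice continuously differentiable,
`u : ℝ^d → ℝ^d` is continuously differentiable with compact support, and
`y ↦ Adj(Dψ(y)) u(y)` is divergence-free, then
`∫ Adj(Dψ(y)) u(y) dy = ∫ det(Dψ(y)) u(y) dy`. -/
theorem integral_adjugate_eq_integral_det {d : ℕ} (hd : 1 ≤ d)
    (ψ : (Fin d → ℝ) → (Fin d → ℝ)) (hψ : ContDiff ℝ 2 ψ)
    (u : (Fin d → ℝ) → (Fin d → ℝ)) (hu : ContDiff ℝ 1 u)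
    (hsupp : HasCompactSupport u)
    (hdivfree : ∀ y : Fin d → ℝ,
      vdiv (fun z => (Matrix.adjugate (jacobian ψ z)).mulVec (u z)) y = 0) :
    (∫ y, (Matrix.adjugate (jacobian ψ y)).mulVec (u y))
      = ∫ y, (jacobian ψ y).det • u y := by
  classical
  set v : (Fin d → ℝ) → (Fin d → ℝ) :=
    fun z => (Matrix.adjugate (jacobian ψ z)).mulVec (u z) with hv_def
  -- basic regularity facts
  have hψ1 : ContDiff ℝ 1 (fderiv ℝ ψ) := hψ.fderiv_right (by norm_num)
  have hJ : ∀ i j, ContDiff ℝ 1 (fun z => jacobian ψ z i j) := by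
    intro i j
    exact (ContinuousLinearMap.proj (R := ℝ) (φ := fun _ : Fin d => ℝ) i).contDiff.comp
      (hψ1.clm_apply contDiff_const)
  have hA : ∀ i j, ContDiff ℝ 1 (fun z => Matrix.adjugate (jacobian ψ z) i j) :=
    fun i j => contDiff_adjugate_aux hJ i j
  have huk : ∀ k, ContDiff ℝ 1 (fun z => u z k) := fun k =>
    (ContinuousLinearMap.proj (R := ℝ) (φ := fun _ : Fin d => ℝ) k).contDiff.comp hu
  have hvC : ∀ j, ContDiff ℝ 1 (fun z => v z j) := by
    intro j
    have : (fun z => v z j) = fun z => ∑ k, Matrix.adjugate (jacobian ψ z) j k * u z k := by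
      funext z
      simp [hv_def, Matrix.mulVec, dotProduct]
    rw [this]
    exact ContDiff.sum fun k _ => (hA j k).mul (huk k)
  have hvcs : HasCompactSupport v := by
    apply HasCompactSupport.intro hsupp
    intro x hx
    have : u x = 0 := image_eq_zero_of_notMem_tsupport hx
    simp [hv_def, this]
  have hvcsj : ∀ j, HasCompactSupport (fun z => v z j) := by
    intro j
    exact hvcs.comp_left (g := fun w : Fin d → ℝ => w j) rfl
  -- compact support of derivatives
  have hvcsj' : ∀ j, HasCompactSupport (fun z => fderiv ℝ (fun z => v z j) z (Pi.single j 1)) :=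
    fun j => (hvcsj j).fderiv_apply ℝ (Pi.single j 1)
  have hvcont : ∀ j, Continuous (fun z => v z j) := fun j => (hvC j).continuous
  have hvcont' : ∀ j, Continuous (fun z => fderiv ℝ (fun z => v z j) z (Pi.single j 1)) := by
    intro j
    exact ((hvC j).continuous_fderiv one_ne_zero).clm_apply continuous_const
  -- divergence is zero, spelled out
  have hdiv0 : ∀ y, ∑ j, fderiv ℝ (fun z => v z j) y (Pi.single j 1) = 0 := by
    intro y
    have := hdivfree y
    simpa [vdiv, hv_def] using this
  -- fderiv of coordinate functions
  have hcoord : ∀ (i : Fin d) (y : Fin d → ℝ),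
      fderiv ℝ (fun z : Fin d → ℝ => z i) y
        = ContinuousLinearMap.proj (R := ℝ) (φ := fun _ : Fin d => ℝ) i := by
    intro i y
    rw [show (fun z : Fin d → ℝ => z i)
        = ⇑(ContinuousLinearMap.proj (R := ℝ) (φ := fun _ : Fin d => ℝ) i) from rfl]
    exact ContinuousLinearMap.fderiv _
  -- fderiv of components of ψ
  have hψcomp : ∀ (i : Fin d), ContDiff ℝ 2 (fun z => ψ z i) := fun i =>
    (ContinuousLinearMap.proj (R := ℝ) (φ := fun _ : Fin d => ℝ) i).contDiff.comp hψ
  have hψfd : ∀ (i : Fin d) (y : Fin d → ℝ) (w : Fin d → ℝ),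
      fderiv ℝ (fun z => ψ z i) y w = fderiv ℝ ψ y w i := by
    intro i y w
    have : fderiv ℝ (fun z => ψ z i) y
        = (ContinuousLinearMap.proj (R := ℝ) (φ := fun _ : Fin d => ℝ) i).comp (fderiv ℝ ψ y) :=
      ((ContinuousLinearMap.proj (R := ℝ) (φ := fun _ : Fin d => ℝ) i).hasFDerivAt.comp y
        ((hψ.differentiable (by norm_num) y).hasFDerivAt)).fderiv
    rw [this]; rfl
  -- Integration by parts, part A : coordinate functions against v
  have ibpA : ∀ (i j : Fin d),
      ∫ y, (fun z : Fin d → ℝ => z i) y * fderiv ℝ (fun z => v z j) y (Pi.single j 1)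
        = - ∫ y, fderiv ℝ (fun z : Fin d → ℝ => z i) y (Pi.single j 1) * v y j := by
    intro i j
    apply integral_mul_fderiv_eq_neg_fderiv_mul_of_integrable
    · apply Continuous.integrable_of_hasCompactSupport
      · simp_rw [hcoord]
        exact continuous_const.mul (hvcont j)
      · exact ((hvcsj j).mul_left)
    · apply Continuous.integrable_of_hasCompactSupport
      · exact (continuous_apply i).mul (hvcont' j)
      · exact ((hvcsj' j).mul_left)
    · apply Continuous.integrable_of_hasCompactSupport
      · exact (continuous_apply i).mul (hvcont j)
      · exact ((hvcsj j).mul_left)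
    · exact fun x _ => (ContinuousLinearMap.proj (R := ℝ) (φ := fun _ : Fin d => ℝ) i).differentiable x
    · exact fun x _ => (hvC j).differentiable one_ne_zero x
  -- Integration by parts, part B : ψ components against v
  have ibpB : ∀ (i j : Fin d),
      ∫ y, (fun z => ψ z i) y * fderiv ℝ (fun z => v z j) y (Pi.single j 1)
        = - ∫ y, fderiv ℝ (fun z => ψ z i) y (Pi.single j 1) * v y j := by
    intro i j
    apply integral_mul_fderiv_eq_neg_fderiv_mul_of_integrable
    · apply Continuous.integrable_of_hasCompactSupport
      · apply Continuous.mul ?_ (hvcont j)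
        simp_rw [hψfd]
        exact (continuous_apply i).comp (hψ1.continuous.clm_apply continuous_const)
      · exact ((hvcsj j).mul_left)
    · apply Continuous.integrable_of_hasCompactSupport
      · exact ((hψcomp i).continuous).mul (hvcont' j)
      · exact ((hvcsj' j).mul_left)
    · apply Continuous.integrable_of_hasCompactSupport
      · exact ((hψcomp i).continuous).mul (hvcont j)
      · exact ((hvcsj j).mul_left)
    · exact fun x _ => (hψcomp i).differentiable (by norm_num) x
    · exact fun x _ => (hvC j).differentiable one_ne_zero x
  -- integrability of each term needed below
  have hIntA : ∀ (i j : Fin d),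
      Integrable (fun y => y i * fderiv ℝ (fun z => v z j) y (Pi.single j 1)) := by
    intro i j
    apply Continuous.integrable_of_hasCompactSupport
    · exact (continuous_apply i).mul (hvcont' j)
    · exact (hvcsj' j).mul_left
  have hψicont : ∀ i : Fin d, Continuous (fun y => ψ y i) := fun i => (hψcomp i).continuous
  have hIntB : ∀ (i j : Fin d),
      Integrable (fun y => ψ y i * fderiv ℝ (fun z => v z j) y (Pi.single j 1)) := by
    intro i j
    apply Continuous.integrable_of_hasCompactSupport
    · exact (hψicont i).mul (hvcont' j)
    · exact (hvcsj' j).mul_left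
  -- Step A : the integral of each component of v is zero
  have intv : ∀ i, ∫ y, v y i = 0 := by
    intro i
    have hsum : ∑ j, ∫ y, y i * fderiv ℝ (fun z => v z j) y (Pi.single j 1) = 0 := by
      rw [← integral_finset_sum _ (fun j _ => hIntA i j)]
      have h0 : ∀ y : Fin d → ℝ,
          ∑ j, y i * fderiv ℝ (fun z => v z j) y (Pi.single j 1) = 0 := by
        intro y
        rw [← Finset.mul_sum, hdiv0 y, mul_zero]
      simp_rw [h0]
      exact integral_zero _ _
    have hterm : ∀ j, ∫ y, y i * fderiv ℝ (fun z => v z j) y (Pi.single j 1)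
        = - ((Pi.single (M := fun _ : Fin d => ℝ) j 1 i) * ∫ y, v y j) := by
      intro j
      rw [ibpA i j]
      congr 1
      simp_rw [hcoord]
      rw [← integral_const_mul]
      rfl
    rw [Finset.sum_congr rfl (fun j _ => hterm j)] at hsum
    rw [Finset.sum_neg_distrib] at hsum
    have : ∑ j, Pi.single (M := fun _ : Fin d => ℝ) j 1 i * ∫ y, v y j = ∫ y, v y i := by
      simp [Pi.single_apply]
    rw [this] at hsum
    linarith
  -- Step B : the integral of each component of det • u is zero
  have hpt : ∀ y, (jacobian ψ y).det • u y = (jacobian ψ y).mulVec (v y) := by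
    intro y
    rw [hv_def]
    rw [Matrix.mulVec_mulVec, Matrix.mul_adjugate, Matrix.smul_mulVec,
      Matrix.one_mulVec]
  have intdet : ∀ i, ∫ y, ((jacobian ψ y).det • u y) i = 0 := by
    intro i
    have e1 : ∀ y, ((jacobian ψ y).det • u y) i
        = ∑ j, fderiv ℝ (fun z => ψ z i) y (Pi.single j 1) * v y j := by
      intro y
      rw [hpt y]
      simp only [Matrix.mulVec, dotProduct, jacobian, Matrix.of_apply]
      congr 1
      funext j
      rw [hψfd]
    simp_rw [e1]
    have hIntB' : ∀ j : Fin d,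
        Integrable (fun y => fderiv ℝ (fun z => ψ z i) y (Pi.single j 1) * v y j) := by
      intro j
      apply Continuous.integrable_of_hasCompactSupport
      · apply Continuous.mul ?_ (hvcont j)
        simp_rw [hψfd]
        exact (continuous_apply i).comp (hψ1.continuous.clm_apply continuous_const)
      · exact (hvcsj j).mul_left
    rw [integral_finset_sum _ (fun j _ => hIntB' j)]
    have hterm : ∀ j, ∫ y, fderiv ℝ (fun z => ψ z i) y (Pi.single j 1) * v y j
        = - ∫ y, ψ y i * fderiv ℝ (fun z => v z j) y (Pi.single j 1) := by
      intro j
      have := ibpB i j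
      linarith
    rw [Finset.sum_congr rfl (fun j _ => hterm j)]
    rw [Finset.sum_neg_distrib]
    rw [← integral_finset_sum _ (fun j _ => hIntB i j)]
    have h0 : ∀ y : Fin d → ℝ,
        ∑ j, ψ y i * fderiv ℝ (fun z => v z j) y (Pi.single j 1) = 0 := by
      intro y
      rw [← Finset.mul_sum, hdiv0 y, mul_zero]
    simp_rw [h0]
    simp
  -- assemble
  have hIv : Integrable v := by
    apply Continuous.integrable_of_hasCompactSupport _ hvcs
    exact continuous_pi fun j => hvcont j
  have hIdu : Integrable (fun y => (jacobian ψ y).det • u y) := by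
    apply Continuous.integrable_of_hasCompactSupport
    · exact ((contDiff_det_aux hJ).continuous).smul hu.continuous
    · apply HasCompactSupport.intro hsupp
      intro x hx
      simp [image_eq_zero_of_notMem_tsupport (f := u) hx]
  funext i
  have e1 : (∫ y, v y) i = ∫ y, v y i :=
    ((ContinuousLinearMap.proj (R := ℝ) (φ := fun _ : Fin d => ℝ) i).integral_comp_comm hIv).symm
  have e2 : (∫ y, (jacobian ψ y).det • u y) i = ∫ y, ((jacobian ψ y).det • u y) i :=
    ((ContinuousLinearMap.proj (R := ℝ) (φ := fun _ : Fin d => ℝ) i).integral_comp_comm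
      hIdu).symm
  rw [e1, e2, intv i, intdet i]
end
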